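/- (Convexity around the minima) For every r > 1/√3 there exist constants α₀ = α₀(r) > 0 and C = C(r) > 0, independent of N, such that for all N ∈ ℕ and all x ∈ ℝ^N with |x̄| ≥ r and Σ_k (x_k − x̄)² ≤ N·α₀²·x̄², the Hessian of V_N at x satisfies Hess V_N(x) ≥ C (as a quadratic form on ℝ^N with the standard Euclidean norm). -/

import Mathlib

open Real Finset

noncomputable section

/-- The normalized discrete Laplacian with periodic boundary conditions. -/
def Kd (μ : ℝ) (N : ℕ) (hN : N ≠ 0) (x : Fin N → ℝ) : Fin N → ℝ :=
  haveI : NeZero N := ⟨hN⟩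
  fun k => μ / (4 * Real.sin (π / N) ^ 2) * (2 * x k - x (k + 1) - x (k - 1))

/-- The double-well energy `V_N(x) = ∑ₖ (1/4)(xₖ²−1)² + (1/2)⟨x, Kx⟩`. -/
def V (μ : ℝ) (N : ℕ) (hN : N ≠ 0) (x : Fin N → ℝ) : ℝ :=
  ∑ k, (1 / 4 : ℝ) * (x k ^ 2 - 1) ^ 2 + (1 / 2 : ℝ) * ∑ k, x k * Kd μ N hN x k

/-- The average `x̄` of a vector. -/
def avg (N : ℕ) (x : Fin N → ℝ) : ℝ := (∑ k, x k) / N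

section
variable (μ : ℝ) (N : ℕ) (hN : N ≠ 0)

lemma fderiv_V (y v : Fin N → ℝ) :
    haveI : NeZero N := ⟨hN⟩
    fderiv ℝ (V μ N hN) y v
      = ∑ k, (y k ^ 2 - 1) * y k * v k
        + (1/2 : ℝ) * ∑ k, (v k * Kd μ N hN y k + y k * Kd μ N hN v k) := by
  haveI : NeZero N := ⟨hN⟩
  set c := μ / (4 * Real.sin (π / N) ^ 2) with hc
  have hproj : ∀ (k : Fin N), HasFDerivAt (fun z : Fin N → ℝ => z k)
      (ContinuousLinearMap.proj k : (Fin N → ℝ) →L[ℝ] ℝ) y := fun k => hasFDerivAt_apply (𝕜 := ℝ) k y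
  have t1 : ∀ k : Fin N, HasFDerivAt (fun z : Fin N → ℝ => (1/4 : ℝ) * ((z k * z k - 1) * (z k * z k - 1)))
      ((1/4 : ℝ) • ((y k * y k - 1) • (y k • (ContinuousLinearMap.proj k : (Fin N → ℝ) →L[ℝ] ℝ) + y k • ContinuousLinearMap.proj k)
        + (y k * y k - 1) • (y k • (ContinuousLinearMap.proj k : (Fin N → ℝ) →L[ℝ] ℝ) + y k • ContinuousLinearMap.proj k))) y := by
    intro k
    have h := (((hproj k).mul (hproj k)).sub_const 1)
    exact (h.mul h).const_mul (1/4)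
  have t2 : ∀ k : Fin N, HasFDerivAt
      (fun z : Fin N → ℝ => z k * (c * (2 * z k - z (k+1) - z (k-1))))
      (y k • (c • ((2 : ℝ) • (ContinuousLinearMap.proj k : (Fin N → ℝ) →L[ℝ] ℝ)
          - ContinuousLinearMap.proj (k+1) - ContinuousLinearMap.proj (k-1)))
        + (c * (2 * y k - y (k+1) - y (k-1))) • (ContinuousLinearMap.proj k : (Fin N → ℝ) →L[ℝ] ℝ)) y := by
    intro k
    have hin : HasFDerivAt (fun z : Fin N → ℝ => c * (2 * z k - z (k+1) - z (k-1)))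
        (c • ((2 : ℝ) • (ContinuousLinearMap.proj k : (Fin N → ℝ) →L[ℝ] ℝ)
          - ContinuousLinearMap.proj (k+1) - ContinuousLinearMap.proj (k-1))) y := by
      exact ((((hproj k).const_mul 2).sub (hproj (k+1))).sub (hproj (k-1))).const_mul c
    exact (hproj k).mul hin
  have hV : HasFDerivAt (V μ N hN)
      ((∑ k, ((1/4 : ℝ) • ((y k * y k - 1) • (y k • (ContinuousLinearMap.proj k : (Fin N → ℝ) →L[ℝ] ℝ) + y k • ContinuousLinearMap.proj k)
        + (y k * y k - 1) • (y k • (ContinuousLinearMap.proj k : (Fin N → ℝ) →L[ℝ] ℝ) + y k • ContinuousLinearMap.proj k))))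
       + (1/2 : ℝ) • ∑ k, (y k • (c • ((2 : ℝ) • (ContinuousLinearMap.proj k : (Fin N → ℝ) →L[ℝ] ℝ)
          - ContinuousLinearMap.proj (k+1) - ContinuousLinearMap.proj (k-1)))
        + (c * (2 * y k - y (k+1) - y (k-1))) • (ContinuousLinearMap.proj k : (Fin N → ℝ) →L[ℝ] ℝ))) y := by
    have h1 : HasFDerivAt (fun z : Fin N → ℝ => ∑ k, (1/4 : ℝ) * ((z k * z k - 1) * (z k * z k - 1)))
        (∑ k, ((1/4 : ℝ) • ((y k * y k - 1) • (y k • (ContinuousLinearMap.proj k : (Fin N → ℝ) →L[ℝ] ℝ) + y k • ContinuousLinearMap.proj k)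
        + (y k * y k - 1) • (y k • (ContinuousLinearMap.proj k : (Fin N → ℝ) →L[ℝ] ℝ) + y k • ContinuousLinearMap.proj k)))) y :=
      HasFDerivAt.fun_sum fun k _ => t1 k
    have h2 : HasFDerivAt (fun z : Fin N → ℝ => (1/2 : ℝ) * ∑ k, z k * (c * (2 * z k - z (k+1) - z (k-1))))
        ((1/2 : ℝ) • ∑ k, (y k • (c • ((2 : ℝ) • (ContinuousLinearMap.proj k : (Fin N → ℝ) →L[ℝ] ℝ)
          - ContinuousLinearMap.proj (k+1) - ContinuousLinearMap.proj (k-1)))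
        + (c * (2 * y k - y (k+1) - y (k-1))) • (ContinuousLinearMap.proj k : (Fin N → ℝ) →L[ℝ] ℝ))) y :=
      (HasFDerivAt.fun_sum fun k _ => t2 k).const_mul (1/2)
    have := h1.fun_add h2
    convert this using 1
    iterate 5 rfl
    funext z
    simp only [V, Kd, hc]
    congr 1
    · exact Finset.sum_congr rfl fun k _ => by ring
  rw [hV.fderiv]
  simp only [Kd, hc, ContinuousLinearMap.add_apply, ContinuousLinearMap.sum_apply,
    ContinuousLinearMap.smul_apply, ContinuousLinearMap.sub_apply, ContinuousLinearMap.proj_apply,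
    smul_eq_mul]
  congr 1
  · exact Finset.sum_congr rfl fun k _ => by ring
  · congr 1
    exact Finset.sum_congr rfl fun k _ => by ring


lemma hess_eq (x v : Fin N → ℝ) :
    haveI : NeZero N := ⟨hN⟩
    fderiv ℝ (fun y => fderiv ℝ (V μ N hN) y v) x v
      = ∑ k, (3 * x k ^ 2 - 1) * v k ^ 2 + ∑ k, v k * Kd μ N hN v k := by
  haveI : NeZero N := ⟨hN⟩
  set c := μ / (4 * Real.sin (π / N) ^ 2) with hc
  have hg : (fun y => fderiv ℝ (V μ N hN) y v)
      = fun y => ∑ k, (y k ^ 2 - 1) * y k * v k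
        + (1/2 : ℝ) * ∑ k, (v k * Kd μ N hN y k + y k * Kd μ N hN v k) :=
    funext fun y => fderiv_V μ N hN y v
  rw [hg]
  have hproj : ∀ (k : Fin N), HasFDerivAt (fun z : Fin N → ℝ => z k)
      (ContinuousLinearMap.proj k : (Fin N → ℝ) →L[ℝ] ℝ) x := fun k => hasFDerivAt_apply (𝕜 := ℝ) k x
  have t1 : ∀ k : Fin N, HasFDerivAt (fun z : Fin N → ℝ => (z k * z k - 1) * z k * v k)
      ((v k) • ((x k * x k - 1) • (ContinuousLinearMap.proj k : (Fin N → ℝ) →L[ℝ] ℝ)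
          + x k • (x k • (ContinuousLinearMap.proj k : (Fin N → ℝ) →L[ℝ] ℝ) + x k • ContinuousLinearMap.proj k))) x := by
    intro k
    have h := (((hproj k).mul (hproj k)).sub_const 1).mul (hproj k)
    exact h.mul_const (v k)
  have t2 : ∀ k : Fin N, HasFDerivAt
      (fun z : Fin N → ℝ => v k * (c * (2 * z k - z (k+1) - z (k-1))) + z k * Kd μ N hN v k)
      ((v k) • (c • ((2 : ℝ) • (ContinuousLinearMap.proj k : (Fin N → ℝ) →L[ℝ] ℝ)
          - ContinuousLinearMap.proj (k+1) - ContinuousLinearMap.proj (k-1)))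
        + (Kd μ N hN v k) • (ContinuousLinearMap.proj k : (Fin N → ℝ) →L[ℝ] ℝ)) x := by
    intro k
    have hin : HasFDerivAt (fun z : Fin N → ℝ => c * (2 * z k - z (k+1) - z (k-1)))
        (c • ((2 : ℝ) • (ContinuousLinearMap.proj k : (Fin N → ℝ) →L[ℝ] ℝ)
          - ContinuousLinearMap.proj (k+1) - ContinuousLinearMap.proj (k-1))) x :=
      ((((hproj k).const_mul 2).sub (hproj (k+1))).sub (hproj (k-1))).const_mul c
    exact (hin.const_mul (v k)).add ((hproj k).mul_const (Kd μ N hN v k))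
  have hG : HasFDerivAt
      (fun y : Fin N → ℝ => ∑ k, (y k ^ 2 - 1) * y k * v k
        + (1/2 : ℝ) * ∑ k, (v k * Kd μ N hN y k + y k * Kd μ N hN v k))
      ((∑ k, ((v k) • ((x k * x k - 1) • (ContinuousLinearMap.proj k : (Fin N → ℝ) →L[ℝ] ℝ)
          + x k • (x k • (ContinuousLinearMap.proj k : (Fin N → ℝ) →L[ℝ] ℝ) + x k • ContinuousLinearMap.proj k))))
        + (1/2 : ℝ) • ∑ k, ((v k) • (c • ((2 : ℝ) • (ContinuousLinearMap.proj k : (Fin N → ℝ) →L[ℝ] ℝ)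
          - ContinuousLinearMap.proj (k+1) - ContinuousLinearMap.proj (k-1)))
        + (Kd μ N hN v k) • (ContinuousLinearMap.proj k : (Fin N → ℝ) →L[ℝ] ℝ))) x := by
    have h1 := HasFDerivAt.fun_sum (fun k (_ : k ∈ Finset.univ) => t1 k)
    have h2 := (HasFDerivAt.fun_sum (fun k (_ : k ∈ Finset.univ) => t2 k)).const_mul (1/2 : ℝ)
    have := h1.fun_add h2
    convert this using 1
    iterate 5 rfl
    funext z
    simp only [Kd, hc]
    congr 1
    · exact Finset.sum_congr rfl fun k _ => by ring
  rw [hG.fderiv]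
  simp only [Kd, hc, ContinuousLinearMap.add_apply, ContinuousLinearMap.sum_apply,
    ContinuousLinearMap.smul_apply, ContinuousLinearMap.sub_apply, ContinuousLinearMap.proj_apply,
    ContinuousLinearMap.smulRight_apply, smul_eq_mul]
  congr 1
  · exact Finset.sum_congr rfl fun k _ => by ring
  · rw [Finset.mul_sum]
    exact Finset.sum_congr rfl fun k _ => by ring


lemma quad_eq (v : Fin N → ℝ) :
    haveI : NeZero N := ⟨hN⟩
    ∑ k, v k * Kd μ N hN v k
      = (μ / (4 * Real.sin (π / N) ^ 2)) * ∑ k, (v k - v (k+1))^2 := by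
  haveI : NeZero N := ⟨hN⟩
  simp only [Kd]
  set c := μ / (4 * Real.sin (π / N) ^ 2) with hc
  have hshift : ∀ f : Fin N → ℝ, ∑ k, f (k+1) = ∑ k, f k :=
    fun f => Fintype.sum_equiv (Equiv.addRight (1 : Fin N)) _ _ (fun k => rfl)
  have h2 : ∑ k, v (k+1) * v (k+1) = ∑ k, v k * v k := hshift (fun k => v k * v k)
  have h1 : ∑ k, v k * v (k-1) = ∑ k, v (k+1) * v k := by
    have := hshift (fun k => v k * v (k-1))
    simpa using this.symm
  have h3 : ∑ k, v (k+1) * v k = ∑ k, v k * v (k+1) :=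
    Finset.sum_congr rfl fun k _ => mul_comm _ _
  have e1 : ∀ k : Fin N, v k * (c * (2 * v k - v (k+1) - v (k-1)))
      = c * (v k * v k) + c * (v k * v k) - c * (v k * v (k+1)) - c * (v k * v (k-1)) :=
    fun k => by ring
  have e2 : ∀ k : Fin N, c * (v k - v (k+1))^2
      = c * (v k * v k) - c * (v (k+1) * v k) - c * (v (k+1) * v k) + c * (v (k+1) * v (k+1)) :=
    fun k => by ring
  rw [Finset.mul_sum, Finset.sum_congr rfl (fun k _ => e1 k),
    Finset.sum_congr rfl (fun k _ => e2 k)]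
  simp only [Finset.sum_sub_distrib, Finset.sum_add_distrib, ← Finset.mul_sum]
  rw [h1, h2, h3]
  ring

lemma quad_nonneg (hμ : 0 ≤ μ) (v : Fin N → ℝ) :
    0 ≤ ∑ k, v k * Kd μ N hN v k := by
  rw [quad_eq μ N hN v]
  have hc : 0 ≤ μ / (4 * Real.sin (π / N) ^ 2) := by positivity
  exact mul_nonneg hc (Finset.sum_nonneg fun k _ => sq_nonneg _)

open Fin.NatCast in
lemma sup_bound (v : Fin N → ℝ) (k : Fin N) :
    haveI : NeZero N := ⟨hN⟩
    (v k - avg N v)^2 ≤ (N : ℝ) * ∑ p, (v p - v (p+1))^2 := by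
  haveI : NeZero N := ⟨hN⟩
  set S := ∑ p, (v p - v (p+1))^2 with hS
  set T := ∑ p, |v p - v (p+1)| with hT
  have hT2 : T^2 ≤ (N : ℝ) * S := by
    have h := sq_sum_le_card_mul_sum_sq (s := (Finset.univ : Finset (Fin N)))
      (f := fun p => |v p - v (p+1)|)
    simpa [sq_abs, Finset.card_univ, hS, hT] using h
  have key : ∀ j : Fin N, |v k - v j| ≤ T := by
    intro j
    set m := (j - k).val with hm
    have hmN : m < N := (j - k).isLt
    have hj : k + (m : Fin N) = j := by
      rw [hm, Fin.cast_val_eq_self, add_sub_cancel]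
    have tele : v k - v j = ∑ i ∈ Finset.range m, (v (k + (i : Fin N)) - v (k + (i : Fin N) + 1)) := by
      have h := Finset.sum_range_sub' (f := fun i : ℕ => v (k + (i : Fin N))) m
      rw [show (∑ i ∈ Finset.range m, (v (k + (i : Fin N)) - v (k + (i : Fin N) + 1)))
          = ∑ i ∈ Finset.range m, (v (k + (i : Fin N)) - v (k + ((i+1 : ℕ) : Fin N))) from
        Finset.sum_congr rfl fun i _ => by push_cast; rw [add_assoc], h]
      simp [hj]
    calc |v k - v j| = |∑ i ∈ Finset.range m, (v (k + (i : Fin N)) - v (k + (i : Fin N) + 1))| := by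
          rw [tele]
      _ ≤ ∑ i ∈ Finset.range m, |v (k + (i : Fin N)) - v (k + (i : Fin N) + 1)| :=
          Finset.abs_sum_le_sum_abs _ _
      _ ≤ ∑ i ∈ Finset.range N, |v (k + (i : Fin N)) - v (k + (i : Fin N) + 1)| :=
          Finset.sum_le_sum_of_subset_of_nonneg (Finset.range_subset_range.2 hmN.le)
            (fun _ _ _ => abs_nonneg _)
      _ = ∑ p : Fin N, |v (k + p) - v (k + p + 1)| := by
          rw [← Fin.sum_univ_eq_sum_range (fun i : ℕ => |v (k + (i : Fin N)) - v (k + (i : Fin N) + 1)|) N]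
          exact Finset.sum_congr rfl fun p _ => by rw [Fin.cast_val_eq_self]
      _ = T := Fintype.sum_equiv (Equiv.addLeft k) _ _ (fun p => rfl)
  have hNpos : (0 : ℝ) < N := by
    exact_mod_cast Nat.pos_of_ne_zero hN
  have havg : v k - avg N v = (∑ j, (v k - v j)) / N := by
    rw [Finset.sum_sub_distrib, Finset.sum_const, Finset.card_univ, Fintype.card_fin]
    field_simp [avg]
    rw [avg, sub_mul, div_mul_cancel₀ _ hNpos.ne', nsmul_eq_mul]
    ring
  have h1 : |v k - avg N v| ≤ T := by
    rw [havg, abs_div, abs_of_nonneg hNpos.le, div_le_iff₀ hNpos]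
    calc |∑ j, (v k - v j)| ≤ ∑ j, |v k - v j| := Finset.abs_sum_le_sum_abs _ _
      _ ≤ ∑ _j : Fin N, T := Finset.sum_le_sum fun j _ => key j
      _ = (N : ℝ) * T := by rw [Finset.sum_const, Finset.card_univ, Fintype.card_fin]; simp [mul_comm]
      _ = T * N := by ring
  calc (v k - avg N v)^2 = |v k - avg N v|^2 := (sq_abs _).symm
    _ ≤ T^2 := by
        apply pow_le_pow_left₀ (abs_nonneg _) h1
    _ ≤ (N : ℝ) * S := hT2

lemma sobolev (hμ : 1 ≤ μ) (v : Fin N → ℝ) (k : Fin N) :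
    haveI : NeZero N := ⟨hN⟩
    (N : ℝ) * (v k - avg N v)^2 ≤ 4 * π^2 * ∑ i, v i * Kd μ N hN v i := by
  haveI : NeZero N := ⟨hN⟩
  set S := ∑ p, (v p - v (p+1))^2 with hS
  have hSnn : 0 ≤ S := Finset.sum_nonneg fun p _ => sq_nonneg _
  have hq := quad_eq μ N hN v
  rcases eq_or_lt_of_le (Nat.one_le_iff_ne_zero.2 hN) with h1 | h2
  · -- N = 1
    have hN1 : N = 1 := h1.symm
    subst hN1
    have : v k - avg 1 v = 0 := by
      simp [avg, Finset.univ_unique, Fin.eq_zero k]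
    rw [this]
    have : 0 ≤ ∑ i, v i * Kd μ 1 hN v i := by
      rw [hq]; positivity
    nlinarith [Real.pi_pos]
  · -- 2 ≤ N
    have hN2 : (2 : ℕ) ≤ N := h2
    have hNpos : (0 : ℝ) < N := by positivity
    have hsin_pos : 0 < Real.sin (π / N) := by
      apply Real.sin_pos_of_pos_of_lt_pi
      · positivity
      · rw [div_lt_iff₀ hNpos]
        nlinarith [Real.pi_pos, show (2:ℝ) ≤ (N:ℝ) from by exact_mod_cast hN2]
    have hsin_le : Real.sin (π / N) < π / N := Real.sin_lt (by positivity)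
    have hsq : Real.sin (π / N)^2 ≤ π^2 / N^2 := by
      have h := pow_le_pow_left₀ hsin_pos.le hsin_le.le 2
      calc Real.sin (π / N)^2 ≤ (π / N)^2 := h
        _ = π^2 / N^2 := by rw [div_pow]
    have hc : μ * N^2 / (4 * π^2) ≤ μ / (4 * Real.sin (π / N) ^ 2) := by
      rw [div_le_div_iff₀ (by positivity) (by positivity)]
      have hμ0 : (0:ℝ) < μ := lt_of_lt_of_le one_pos hμ
      have : (N:ℝ)^2 * Real.sin (π / N)^2 ≤ π^2 := by
        have := mul_le_mul_of_nonneg_left hsq (show (0:ℝ) ≤ (N:ℝ)^2 by positivity)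
        calc (N:ℝ)^2 * Real.sin (π / N)^2 ≤ (N:ℝ)^2 * (π^2 / (N:ℝ)^2) := this
          _ = π^2 := by field_simp
      nlinarith
    have hsup := sup_bound N hN v k
    have hstep : (N : ℝ) * (v k - avg N v)^2 ≤ (N:ℝ)^2 * S := by
      have := mul_le_mul_of_nonneg_left hsup hNpos.le
      calc (N : ℝ) * (v k - avg N v)^2 ≤ (N:ℝ) * ((N:ℝ) * S) := this
        _ = (N:ℝ)^2 * S := by ring
    rw [hq]
    have hfin : (N:ℝ)^2 * S ≤ 4 * π^2 * (μ / (4 * Real.sin (π / N) ^ 2) * S) := by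
      have h1 : μ * (N:ℝ)^2 / (4 * π^2) * S ≤ μ / (4 * Real.sin (π / N) ^ 2) * S :=
        mul_le_mul_of_nonneg_right hc hSnn
      have hμ0 : (0:ℝ) < μ := lt_of_lt_of_le one_pos hμ
      have h2 : (N:ℝ)^2 * S ≤ μ * (N:ℝ)^2 * S := by
        nlinarith [mul_nonneg (mul_nonneg (sub_nonneg.2 hμ) (sq_nonneg (N:ℝ))) hSnn]
      have h3 : 4 * π^2 * (μ * (N:ℝ)^2 / (4 * π^2) * S) = μ * (N:ℝ)^2 * S := by
        field_simp
      nlinarith [Real.pi_pos, mul_le_mul_of_nonneg_left h1 (show (0:ℝ) ≤ 4*π^2 by positivity)]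
    linarith


end

set_option maxHeartbeats 2000000 in
/-- Convexity of `V_N` around the minima: for every `r > 1/√3` there are `α₀, C > 0`,
independent of `N`, such that `Hess V_N(x) ≥ C` (as a quadratic form w.r.t. the Euclidean
norm) whenever `|x̄| ≥ r` and `∑ₖ(xₖ − x̄)² ≤ N α₀² x̄²`. -/
theorem stmt_7 (μ : ℝ) (hμ : 1 < μ) (r : ℝ) (hr : 1 / Real.sqrt 3 < r) :
    ∃ α₀ > 0, ∃ C > 0, ∀ N : ℕ, ∀ hN : N ≠ 0, ∀ x : Fin N → ℝ,
      r ≤ |avg N x| →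
      ∑ k, (x k - avg N x) ^ 2 ≤ N * α₀ ^ 2 * avg N x ^ 2 →
      ∀ v : Fin N → ℝ,
        fderiv ℝ (fun y => fderiv ℝ (V μ N hN) y v) x v ≥ C * ∑ i, v i ^ 2 := by
  have hr0 : 0 < r := lt_trans (by positivity) hr
  have hr2 : 1/3 < r^2 := by
    have h1 : (1 / Real.sqrt 3)^2 < r^2 := by
      apply pow_lt_pow_left₀ hr (by positivity) (by norm_num)
    have h2 : (1 / Real.sqrt 3)^2 = 1/3 := by
      rw [div_pow, one_pow, Real.sq_sqrt (by norm_num : (3:ℝ) ≥ 0)]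
    linarith
  set δ := 3*r^2 - 1 with hδdef
  have hδ : 0 < δ := by rw [hδdef]; linarith
  set η := δ/(12*r^2) with hηdef
  have hηpos : 0 < η := by rw [hηdef]; positivity
  have hηr : 12*r^2*η = δ := by rw [hηdef]; field_simp
  have hηlt : η < 1 := by nlinarith
  set m := min (1/(4*π^2)) (δ/8) with hmdef
  have hmpos : 0 < m := lt_min (by positivity) (by positivity)
  refine ⟨η * Real.sqrt (m/(δ+2)), by positivity, δ/4, by positivity, ?_⟩
  set α₀ := η * Real.sqrt (m/(δ+2)) with hα₀
  intro N hN x hrx hcl v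
  haveI : NeZero N := ⟨hN⟩
  have hα2 : α₀^2 * (δ+2) = η^2 * m := by
    rw [hα₀, mul_pow, Real.sq_sqrt (by positivity : (0:ℝ) ≤ m/(δ+2))]
    field_simp
  have hapos : 0 < |avg N x| := lt_of_lt_of_le hr0 hrx
  have hNpos : (0:ℝ) < N := by exact_mod_cast Nat.pos_of_ne_zero hN
  rw [ge_iff_le, hess_eq μ N hN x v]
  -- abbreviations
  obtain ⟨A, hA⟩ : ∃ A, A = ∑ i, v i^2 := ⟨_, rfl⟩
  obtain ⟨T, hT⟩ : ∃ T, T = ∑ i, v i * Kd μ N hN v i := ⟨_, rfl⟩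
  obtain ⟨a, ha⟩ : ∃ a, a = avg N x := ⟨_, rfl⟩
  obtain ⟨vb, hvb⟩ : ∃ vb, vb = avg N v := ⟨_, rfl⟩
  rw [← hA, ← hT]
  rw [← ha] at hrx hcl hapos
  have hAnn : 0 ≤ A := hA ▸ Finset.sum_nonneg fun i _ => sq_nonneg _
  have hTnn : 0 ≤ T := hT ▸ quad_nonneg μ N hN (by linarith) v
  have hsob : ∀ k, (v k - vb)^2 ≤ 4*π^2*T/(N:ℝ) := by
    intro k
    have h := sobolev μ N hN hμ.le v k
    rw [← hvb, ← hT] at h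
    rw [le_div_iff₀ hNpos]
    linarith
  set B := Finset.univ.filter (fun k : Fin N => η * |a| < |x k - a|) with hBdef
  obtain ⟨b, hb⟩ : ∃ b : ℝ, b = (B.card : ℝ) := ⟨_, rfl⟩
  have hbnn : 0 ≤ b := hb ▸ Nat.cast_nonneg _
  obtain ⟨SB, hSB⟩ : ∃ SB, SB = ∑ k ∈ B, v k^2 := ⟨_, rfl⟩
  have hSBnn : 0 ≤ SB := hSB ▸ Finset.sum_nonneg fun i _ => sq_nonneg _
  -- cardinality bound
  have hcard : b * (δ+2) ≤ (N:ℝ) * m := by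
    have h1 : ∀ k ∈ B, (η*|a|)^2 ≤ (x k - a)^2 := by
      intro k hk
      have hk' := (Finset.mem_filter.1 hk).2
      calc (η*|a|)^2 ≤ |x k - a|^2 :=
            pow_le_pow_left₀ (by positivity) hk'.le 2
        _ = (x k - a)^2 := sq_abs _
    have h2 : b * (η*|a|)^2 ≤ ∑ k ∈ B, (x k - a)^2 := by
      rw [hb]
      calc (B.card : ℝ) * (η*|a|)^2 = ∑ _k ∈ B, (η*|a|)^2 := by
            rw [Finset.sum_const, nsmul_eq_mul]
        _ ≤ _ := Finset.sum_le_sum h1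
    have h3 : ∑ k ∈ B, (x k - a)^2 ≤ ∑ k, (x k - a)^2 :=
      Finset.sum_le_sum_of_subset_of_nonneg (Finset.subset_univ B)
        (fun _ _ _ => sq_nonneg _)
    have h4 : b * (η^2 * a^2) ≤ (N:ℝ) * α₀^2 * a^2 := by
      have := le_trans (le_trans h2 h3) hcl
      calc b * (η^2 * a^2) = b * (η*|a|)^2 := by rw [mul_pow, sq_abs]
        _ ≤ (N:ℝ) * α₀^2 * a^2 := this
    have ha2 : (0:ℝ) < a^2 := by
      have : a ≠ 0 := abs_pos.1 hapos
      positivity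
    have h5 : b * η^2 ≤ (N:ℝ) * α₀^2 :=
      le_of_mul_le_mul_right (by calc b * η^2 * a^2 = b * (η^2*a^2) := by ring
        _ ≤ (N:ℝ) * α₀^2 * a^2 := h4) ha2
    have h6 : b * (δ+2) * η^2 ≤ (N:ℝ) * m * η^2 := by
      calc b * (δ+2) * η^2 = (b * η^2) * (δ+2) := by ring
        _ ≤ ((N:ℝ) * α₀^2) * (δ+2) := mul_le_mul_of_nonneg_right h5 (by linarith)
        _ = (N:ℝ) * (α₀^2 * (δ+2)) := by ring
        _ = (N:ℝ) * (η^2 * m) := by rw [hα2]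
        _ = (N:ℝ) * m * η^2 := by ring
    exact le_of_mul_le_mul_right h6 (by positivity)
  -- good set bound
  have hgood : ∀ k : Fin N, k ∉ B → δ/2 + 1 ≤ 3 * x k^2 := by
    intro k hk
    have hk' : |x k - a| ≤ η * |a| := by
      by_contra h
      exact hk (Finset.mem_filter.2 ⟨Finset.mem_univ k, lt_of_not_ge h⟩)
    have h5 : (1-η)*r ≤ |x k| := by
      have t1 : |a| - |x k - a| ≤ |x k| := by
        have h := abs_sub_abs_le_abs_sub a (x k)
        rw [abs_sub_comm a (x k)] at h
        linarith
      calc (1-η)*r ≤ (1-η)*|a| := by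
            apply mul_le_mul_of_nonneg_left hrx (by linarith)
        _ = |a| - η*|a| := by ring
        _ ≤ |a| - |x k - a| := by linarith
        _ ≤ |x k| := t1
    have h6 : ((1-η)*r)^2 ≤ x k^2 := by
      rw [← sq_abs (x k)]
      exact pow_le_pow_left₀ (by nlinarith) h5 2
    nlinarith [h6, hηr, mul_nonneg (mul_nonneg hηpos.le hηpos.le) (sq_nonneg r)]
  -- main sum lower bound
  have hmain1 : δ/2*A - (δ/2+1)*SB ≤ ∑ k, (3 * x k^2 - 1)*v k^2 := by
    have e := Finset.sum_filter_add_sum_filter_not Finset.univ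
      (fun k : Fin N => η * |a| < |x k - a|) (fun k => (3 * x k^2 - 1)*v k^2)
    have e2 := Finset.sum_filter_add_sum_filter_not Finset.univ
      (fun k : Fin N => η * |a| < |x k - a|) (fun k => v k^2)
    have hbad : -SB ≤ ∑ k ∈ B, (3 * x k^2 - 1)*v k^2 := by
      rw [hSB, ← Finset.sum_neg_distrib]
      apply Finset.sum_le_sum
      intro k _
      nlinarith [mul_nonneg (sq_nonneg (x k)) (sq_nonneg (v k)), sq_nonneg (v k)]
    have hgood2 : δ/2 * (A - SB) ≤
        ∑ k ∈ Finset.univ.filter (fun k : Fin N => ¬ (η * |a| < |x k - a|)), (3 * x k^2 - 1)*v k^2 := by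
      have hAc : ∑ k ∈ Finset.univ.filter (fun k : Fin N => ¬ (η * |a| < |x k - a|)), v k^2
          = A - SB := by
        rw [hA, hSB, hBdef]
        linarith [e2]
      rw [← hAc, Finset.mul_sum]
      apply Finset.sum_le_sum
      intro k hk
      have hknB : k ∉ B := by
        rw [hBdef]
        simp only [Finset.mem_filter, Finset.mem_univ, true_and]
        exact (Finset.mem_filter.1 hk).2
      have := hgood k hknB
      nlinarith [sq_nonneg (v k)]
    have heq : (δ/2)*A - (δ/2+1)*SB = -SB + δ/2*(A - SB) := by ring
    rw [hBdef] at hbad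
    linarith [e, hbad, hgood2]
  -- bad set sum bound
  have hSB2 : SB ≤ b * (2*vb^2 + 8*π^2*T/(N:ℝ)) := by
    rw [hSB, hb]
    calc ∑ k ∈ B, v k^2 ≤ ∑ _k ∈ B, (2*vb^2 + 8*π^2*T/(N:ℝ)) := by
          apply Finset.sum_le_sum
          intro k _
          nlinarith [hsob k, sq_nonneg (2*vb - v k),
            show 8*π^2*T/(N:ℝ) = 2*(4*π^2*T/(N:ℝ)) by ring]
      _ = (B.card : ℝ) * (2*vb^2 + 8*π^2*T/(N:ℝ)) := by
          rw [Finset.sum_const, nsmul_eq_mul]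
  -- Cauchy-Schwarz: N * vb^2 ≤ A
  have hvbA : (N:ℝ) * vb^2 ≤ A := by
    have h := sq_sum_le_card_mul_sum_sq (s := (Finset.univ : Finset (Fin N))) (f := v)
    rw [Finset.card_univ, Fintype.card_fin] at h
    have h' : (∑ i, v i)^2 ≤ (N:ℝ) * A := by
      rw [hA]; exact_mod_cast h
    have hvb2 : vb = (∑ i, v i)/(N:ℝ) := by rw [hvb]; rfl
    rw [hvb2, div_pow]
    have heq : (N:ℝ) * ((∑ i, v i)^2 / (N:ℝ)^2) = (∑ i, v i)^2/(N:ℝ) := by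
      field_simp
    rw [heq, div_le_iff₀ hNpos]
    nlinarith
  have hstep3 : (δ+2)*b*(4*π^2*T/(N:ℝ)) ≤ T := by
    have hm1 : m ≤ 1/(4*π^2) := min_le_left _ _
    have h2 : b*(δ+2) ≤ (N:ℝ)/(4*π^2) := by
      calc b*(δ+2) ≤ (N:ℝ)*m := hcard
        _ ≤ (N:ℝ)*(1/(4*π^2)) := mul_le_mul_of_nonneg_left hm1 hNpos.le
        _ = (N:ℝ)/(4*π^2) := by ring
    have h1 : (δ+2)*b*4*π^2 ≤ (N:ℝ) := by
      calc (δ+2)*b*4*π^2 = (b*(δ+2))*(4*π^2) := by ring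
        _ ≤ ((N:ℝ)/(4*π^2))*(4*π^2) := mul_le_mul_of_nonneg_right h2 (by positivity)
        _ = (N:ℝ) := by field_simp
    calc (δ+2)*b*(4*π^2*T/(N:ℝ)) = ((δ+2)*b*4*π^2)*(T/(N:ℝ)) := by ring
      _ ≤ (N:ℝ)*(T/(N:ℝ)) := mul_le_mul_of_nonneg_right h1 (by positivity)
      _ = T := by field_simp
  have hstep4 : (δ+2)*b*vb^2 ≤ (δ/8)*A := by
    have hm2 : m ≤ δ/8 := min_le_right _ _
    calc (δ+2)*b*vb^2 = (b*(δ+2))*vb^2 := by ring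
      _ ≤ ((N:ℝ)*m)*vb^2 := mul_le_mul_of_nonneg_right hcard (sq_nonneg _)
      _ ≤ ((N:ℝ)*(δ/8))*vb^2 :=
          mul_le_mul_of_nonneg_right (mul_le_mul_of_nonneg_left hm2 hNpos.le) (sq_nonneg _)
      _ = (δ/8)*((N:ℝ)*vb^2) := by ring
      _ ≤ (δ/8)*A := mul_le_mul_of_nonneg_left hvbA (by positivity)
  have hfinal : (δ/2+1)*SB ≤ (δ/8)*A + T := by
    have h1 : (δ/2+1)*SB ≤ (δ/2+1)*(b*(2*vb^2 + 8*π^2*T/(N:ℝ))) :=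
      mul_le_mul_of_nonneg_left hSB2 (by linarith)
    have h2 : (δ/2+1)*(b*(2*vb^2 + 8*π^2*T/(N:ℝ)))
        = (δ+2)*b*vb^2 + (δ+2)*b*(4*π^2*T/(N:ℝ)) := by ring
    linarith [hstep3, hstep4]
  nlinarith [hmain1, hfinal, mul_nonneg hδ.le hAnn]
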